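/- Let (I_n)_{n∈ℤ} be a centered Gaussian process with I_0 = 0 such that (I_n)_{n∈ℤ} has the same law as (I_{−n})_{n∈ℤ} and, for every n_0 ∈ ℤ, (I_{n_0+n} − I_{n_0} − n·T_{n_0})_{n∈ℤ} has the same law as (I_n)_{n∈ℤ} for some random variables T_{n_0} with E[T_{n_0}] = 0. Then E[−min_{1≤n≤N} (I_N − I_{N−n})/n] = E[max_{1≤n≤N} I_n/n], and consequently, with F_N = Σ_{k=1}^{N−1} max(γ_k^− − γ_k^+, 0) as in the concave-majorant telescoping identity, E[F_N] = 2·E[max_{1≤n≤N} I_n/n]. -/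

import Mathlib

open MeasureTheory ProbabilityTheory

/-- A real-valued family `X` is a centered Gaussian family if every finite linear
combination of its members has a centered Gaussian distribution. -/
def IsCenteredGaussianFamily {Ω : Type*} [MeasurableSpace Ω] (P : Measure Ω)
    {T : Type*} (X : T → Ω → ℝ) : Prop :=
  ∀ (m : ℕ) (t : Fin m → T) (c : Fin m → ℝ), ∃ v : NNReal,
    Measure.map (fun ω => ∑ i, c i * X (t i) ω) P = gaussianReal 0 v

namespace Stmt9

open Real

noncomputable def slope (a : ℤ → ℝ) (i j : ℤ) : ℝ := (a j - a i) / ((j : ℝ) - (i : ℝ))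

lemma comb_le_max {p q x y : ℝ} (hp : 0 < p) (hq : 0 < q) :
    (p * x + q * y) / (p + q) ≤ max x y := by
  rw [div_le_iff₀ (by linarith)]
  have hx := le_max_left x y
  have hy := le_max_right x y
  nlinarith

lemma min_le_comb {p q x y : ℝ} (hp : 0 < p) (hq : 0 < q) :
    min x y ≤ (p * x + q * y) / (p + q) := by
  rw [le_div_iff₀ (by linarith)]
  have hx := min_le_left x y
  have hy := min_le_right x y
  nlinarith

lemma slope_split (a : ℤ → ℝ) {i k j : ℤ} (h1 : i < k) (h2 : k < j) :
    slope a i j = (((k:ℝ) - i) * slope a i k + ((j:ℝ) - k) * slope a k j)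
      / (((k:ℝ) - i) + ((j:ℝ) - k)) := by
  have hp : ((k:ℝ) - i) ≠ 0 := sub_ne_zero.mpr (by exact_mod_cast h1.ne')
  have hq : ((j:ℝ) - k) ≠ 0 := sub_ne_zero.mpr (by exact_mod_cast h2.ne')
  have e1 : ((k:ℝ) - i) * slope a i k = a k - a i := by
    unfold slope; field_simp
  have e2 : ((j:ℝ) - k) * slope a k j = a j - a k := by
    unfold slope; field_simp
  rw [e1, e2]
  unfold slope
  rw [show a j - a i = (a k - a i) + (a j - a k) by ring,
    show (j:ℝ) - i = ((k:ℝ) - i) + ((j:ℝ) - k) by ring]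

lemma slope_le_max (a : ℤ → ℝ) {i k j : ℤ} (h1 : i < k) (h2 : k < j) :
    slope a i j ≤ max (slope a i k) (slope a k j) := by
  have hp : (0:ℝ) < (k:ℝ) - i := by
    have : (i:ℝ) < k := by exact_mod_cast h1
    linarith
  have hq : (0:ℝ) < (j:ℝ) - k := by
    have : (k:ℝ) < j := by exact_mod_cast h2
    linarith
  rw [slope_split a h1 h2]
  exact comb_le_max hp hq

lemma min_le_slope (a : ℤ → ℝ) {i k j : ℤ} (h1 : i < k) (h2 : k < j) :
    min (slope a i k) (slope a k j) ≤ slope a i j := by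
  have hp : (0:ℝ) < (k:ℝ) - i := by
    have : (i:ℝ) < k := by exact_mod_cast h1
    linarith
  have hq : (0:ℝ) < (j:ℝ) - k := by
    have : (k:ℝ) < j := by exact_mod_cast h2
    linarith
  rw [slope_split a h1 h2]
  exact min_le_comb hp hq

noncomputable def gm (a : ℤ → ℝ) (k : ℤ) : ℝ :=
  sInf ((fun i => slope a i k) '' Set.Icc 0 (k-1))

noncomputable def gp (a : ℤ → ℝ) (Nz k : ℤ) : ℝ :=
  sSup ((fun j => slope a k j) '' Set.Icc (k+1) Nz)

noncomputable def FF (a : ℤ → ℝ) (Nz k i : ℤ) : ℝ :=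
  sSup ((fun j => slope a i j) '' Set.Icc k Nz)

noncomputable def dd (a : ℤ → ℝ) (Nz k : ℤ) : ℝ :=
  sInf ((fun i => FF a Nz k i) '' Set.Icc 0 (k-1))


section helpers
variable {f : ℤ → ℝ} {a b : ℤ} {x : ℝ}

lemma bddA : BddAbove (f '' Set.Icc a b) := ((Set.finite_Icc a b).image f).bddAbove
lemma bddB : BddBelow (f '' Set.Icc a b) := ((Set.finite_Icc a b).image f).bddBelow

lemma le_sSup' {i : ℤ} (hi : i ∈ Set.Icc a b) : f i ≤ sSup (f '' Set.Icc a b) :=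
  le_csSup bddA ⟨i, hi, rfl⟩

lemma sInf_le' {i : ℤ} (hi : i ∈ Set.Icc a b) : sInf (f '' Set.Icc a b) ≤ f i :=
  csInf_le bddB ⟨i, hi, rfl⟩

lemma sSup_le' (hab : a ≤ b) (h : ∀ i ∈ Set.Icc a b, f i ≤ x) : sSup (f '' Set.Icc a b) ≤ x :=
  csSup_le ((Set.nonempty_Icc.mpr hab).image f) (by rintro y ⟨i, hi, rfl⟩; exact h i hi)

lemma le_sInf' (hab : a ≤ b) (h : ∀ i ∈ Set.Icc a b, x ≤ f i) : x ≤ sInf (f '' Set.Icc a b) :=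
  le_csInf ((Set.nonempty_Icc.mpr hab).image f) (by rintro y ⟨i, hi, rfl⟩; exact h i hi)

lemma sSup_mem' (hab : a ≤ b) : ∃ i ∈ Set.Icc a b, sSup (f '' Set.Icc a b) = f i := by
  have := ((Set.nonempty_Icc.mpr hab).image f).csSup_mem ((Set.finite_Icc a b).image f)
  obtain ⟨i, hi, h⟩ := this
  exact ⟨i, hi, h.symm⟩

lemma sInf_mem' (hab : a ≤ b) : ∃ i ∈ Set.Icc a b, sInf (f '' Set.Icc a b) = f i := by
  have := ((Set.nonempty_Icc.mpr hab).image f).csInf_mem ((Set.finite_Icc a b).image f)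
  obtain ⟨i, hi, h⟩ := this
  exact ⟨i, hi, h.symm⟩

end helpers

section step
variable {a : ℤ → ℝ} {Nz k : ℤ}

lemma FF_collapse (hk1 : 1 ≤ k) (hk2 : k + 1 ≤ Nz) (hle : gp a Nz k ≤ gm a k)
    {i : ℤ} (hi : i ∈ Set.Icc 0 (k-1)) : FF a Nz k i = slope a i k := by
  obtain ⟨hi0, hik⟩ := hi
  have hik' : i < k := by omega
  apply le_antisymm
  · apply sSup_le' (by omega)
    rintro j ⟨hj1, hj2⟩
    rcases eq_or_lt_of_le hj1 with h | h
    · rw [← h]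
    · refine (slope_le_max a hik' h).trans (max_le le_rfl ?_)
      calc slope a k j ≤ gp a Nz k := le_sSup' ⟨by omega, hj2⟩
        _ ≤ gm a k := hle
        _ ≤ slope a i k := sInf_le' ⟨hi0, hik⟩
  · exact le_sSup' ⟨le_rfl, by omega⟩

lemma dd_eq_gm (hk1 : 1 ≤ k) (hk2 : k + 1 ≤ Nz) (hle : gp a Nz k ≤ gm a k) :
    dd a Nz k = gm a k := by
  unfold dd gm
  rw [Set.image_congr (fun i hi => FF_collapse hk1 hk2 hle hi)]

lemma dd_succ_eq_gp (hk1 : 1 ≤ k) (hk2 : k + 1 ≤ Nz) (hle : gp a Nz k ≤ gm a k) :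
    dd a Nz (k+1) = gp a Nz k := by
  obtain ⟨j', hj', hgpj⟩ := sSup_mem' (f := fun j => slope a k j) (by omega : k + 1 ≤ Nz)
  obtain ⟨hj'1, hj'2⟩ := hj'
  have hgpj' : gp a Nz k = slope a k j' := hgpj
  apply le_antisymm
  · have h0 : FF a Nz (k+1) k = gp a Nz k := rfl
    calc dd a Nz (k+1) ≤ FF a Nz (k+1) k := sInf_le' ⟨by omega, by omega⟩
      _ = gp a Nz k := h0
  · apply le_sInf' (by omega)
    rintro i ⟨hi0, hik⟩
    by_cases hik2 : i = k
    · subst hik2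
      have h0 : FF a Nz (i+1) i = gp a Nz i := rfl
      rw [h0]
    · have hik' : i < k := by omega
      have h1 : gp a Nz k ≤ slope a i j' := by
        refine le_trans (le_min ?_ ?_) (min_le_slope a hik' (by omega : k < j'))
        · exact hle.trans (sInf_le' ⟨hi0, by omega⟩)
        · rw [← hgpj']
      exact h1.trans (le_sSup' (f := fun j => slope a i j) ⟨by omega, hj'2⟩)

lemma dd_antitone (hk1 : 1 ≤ k) (hk2 : k + 1 ≤ Nz) : dd a Nz (k+1) ≤ dd a Nz k := by
  apply le_sInf' (by omega)
  rintro i ⟨hi0, hik⟩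
  calc dd a Nz (k+1) ≤ FF a Nz (k+1) i := sInf_le' ⟨hi0, by omega⟩
    _ ≤ FF a Nz k i := by
        apply sSup_le' (by omega)
        rintro j ⟨hj1, hj2⟩
        exact le_sSup' (f := fun j => slope a i j) ⟨by omega, hj2⟩

lemma dd_le_succ (hk1 : 1 ≤ k) (hk2 : k + 1 ≤ Nz) (hlt : gm a k < gp a Nz k) :
    dd a Nz k ≤ dd a Nz (k+1) := by
  obtain ⟨i0, hi0m, hgmi⟩ := sInf_mem' (f := fun i => slope a i k) (by omega : (0:ℤ) ≤ k - 1)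
  obtain ⟨hi01, hi02⟩ := hi0m
  obtain ⟨j', hj'm, hgpj⟩ := sSup_mem' (f := fun j => slope a k j) (by omega : k + 1 ≤ Nz)
  obtain ⟨hj'1, hj'2⟩ := hj'm
  have hgmi' : gm a k = slope a i0 k := hgmi
  have hgpj' : gp a Nz k = slope a k j' := hgpj
  have hi0k : i0 < k := by omega
  have hkj' : k < j' := by omega
  have hFi0 : FF a Nz k i0 ≤ gp a Nz k := by
    apply sSup_le' (by omega)
    rintro j ⟨hj1, hj2⟩
    rcases eq_or_lt_of_le hj1 with h | h
    · rw [← h, ← hgmi']; exact hlt.le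
    · refine (slope_le_max a hi0k h).trans (max_le ?_ ?_)
      · rw [← hgmi']; exact hlt.le
      · exact le_sSup' (f := fun j => slope a k j) ⟨by omega, hj2⟩
  have hddk : dd a Nz k ≤ gp a Nz k := (sInf_le' ⟨hi01, hi02⟩).trans hFi0
  apply le_sInf' (by omega)
  rintro i ⟨hi0', hik⟩
  by_cases hik2 : i = k
  · subst hik2
    have h0 : FF a Nz (i+1) i = gp a Nz i := rfl
    rw [h0]; exact hddk
  · have hik' : i < k := by omega
    by_cases hcase : slope a i k ≤ gp a Nz k
    · have h1 : slope a i k ≤ slope a i j' := by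
        refine le_trans ?_ (min_le_slope a hik' hkj')
        rw [hgpj'] at hcase
        exact le_min le_rfl hcase
      calc dd a Nz k ≤ FF a Nz k i := sInf_le' ⟨hi0', by omega⟩
        _ ≤ FF a Nz (k+1) i := by
            apply sSup_le' (by omega)
            rintro j ⟨hj1, hj2⟩
            rcases eq_or_lt_of_le hj1 with hh | hh
            · rw [← hh]
              exact h1.trans (le_sSup' (f := fun j => slope a i j) ⟨by omega, hj'2⟩)
            · exact le_sSup' (f := fun j => slope a i j) ⟨by omega, hj2⟩
    · push_neg at hcase
      have h2 : gp a Nz k ≤ slope a i j' := by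
        refine le_trans (le_min hcase.le ?_) (min_le_slope a hik' hkj')
        rw [hgpj']
      calc dd a Nz k ≤ gp a Nz k := hddk
        _ ≤ FF a Nz (k+1) i := h2.trans (le_sSup' (f := fun j => slope a i j) ⟨by omega, hj'2⟩)

lemma step (hk1 : 1 ≤ k) (hk2 : k + 1 ≤ Nz) :
    max (gm a k - gp a Nz k) 0 = dd a Nz k - dd a Nz (k+1) := by
  rcases le_or_gt (gp a Nz k) (gm a k) with hle | hlt
  · rw [max_eq_left (by linarith), dd_eq_gm hk1 hk2 hle, dd_succ_eq_gp hk1 hk2 hle]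
  · rw [max_eq_right (by linarith),
      le_antisymm (dd_le_succ hk1 hk2 hlt) (dd_antitone hk1 hk2), sub_self]

end step

lemma img_gm (a : ℤ → ℝ) (k : ℤ) :
    (fun n : ℤ => (a k - a (k - n)) / (n : ℝ)) '' Set.Icc 1 k
      = (fun i => slope a i k) '' Set.Icc 0 (k-1) := by
  ext x
  simp only [Set.mem_image, Set.mem_Icc]
  constructor
  · rintro ⟨n, ⟨h1, h2⟩, rfl⟩
    refine ⟨k - n, ⟨by omega, by omega⟩, ?_⟩
    unfold slope
    rw [show ((k:ℝ) - ((k - n : ℤ) : ℝ)) = (n:ℝ) by push_cast; ring]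
  · rintro ⟨i, ⟨h1, h2⟩, rfl⟩
    refine ⟨k - i, ⟨by omega, by omega⟩, ?_⟩
    unfold slope
    rw [show k - (k - i) = i by ring, show (((k - i : ℤ)) : ℝ) = (k:ℝ) - (i:ℝ) by push_cast; ring]

lemma img_gp (a : ℤ → ℝ) (Nz k : ℤ) :
    (fun n : ℤ => (a (k + n) - a k) / (n : ℝ)) '' Set.Icc 1 (Nz - k)
      = (fun j => slope a k j) '' Set.Icc (k+1) Nz := by
  ext x
  simp only [Set.mem_image, Set.mem_Icc]
  constructor
  · rintro ⟨n, ⟨h1, h2⟩, rfl⟩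
    refine ⟨k + n, ⟨by omega, by omega⟩, ?_⟩
    unfold slope
    rw [show (((k + n : ℤ) : ℝ) - (k:ℝ)) = (n:ℝ) by push_cast; ring]
  · rintro ⟨j, ⟨h1, h2⟩, rfl⟩
    refine ⟨j - k, ⟨by omega, by omega⟩, ?_⟩
    unfold slope
    rw [show k + (j - k) = j by ring, show (((j - k : ℤ)) : ℝ) = (j:ℝ) - (k:ℝ) by push_cast; ring]

lemma dd_one (a : ℤ → ℝ) (ha0 : a 0 = 0) (Nz : ℤ) :
    dd a Nz 1 = sSup ((fun n : ℤ => a n / (n : ℝ)) '' Set.Icc 1 Nz) := by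
  unfold dd
  rw [show (1:ℤ) - 1 = 0 by ring, Set.Icc_self, Set.image_singleton, csInf_singleton]
  unfold FF
  congr 1
  apply Set.image_congr
  intro n _
  unfold slope
  rw [ha0]
  norm_num

lemma dd_top (a : ℤ → ℝ) (Nz : ℤ) :
    dd a Nz Nz = sInf ((fun n : ℤ => (a Nz - a (Nz - n)) / (n : ℝ)) '' Set.Icc 1 Nz) := by
  unfold dd
  rw [img_gm]
  apply congrArg
  apply Set.image_congr
  intro i _
  unfold FF
  rw [Set.Icc_self, Set.image_singleton, csSup_singleton]

lemma sum_tele (f : ℤ → ℝ) : ∀ N : ℕ, 1 ≤ N →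
    ∑ k ∈ Finset.Icc (1:ℤ) ((N:ℤ) - 1), (f k - f (k+1)) = f 1 - f (N:ℤ) := by
  intro N
  induction N with
  | zero => omega
  | succ n ih =>
    intro _
    by_cases hn : 1 ≤ n
    · have h1 : ((n + 1 : ℕ) : ℤ) - 1 = (n : ℤ) := by push_cast; ring
      have h2 : Finset.Icc (1:ℤ) (n:ℤ) = insert (n:ℤ) (Finset.Icc 1 ((n:ℤ) - 1)) := by
        ext x; simp only [Finset.mem_Icc, Finset.mem_insert]; omega
      have h3 : (n:ℤ) ∉ Finset.Icc (1:ℤ) ((n:ℤ) - 1) := by simp [Finset.mem_Icc]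
      rw [h1, h2, Finset.sum_insert h3, ih hn]
      push_cast
      ring
    · have hn0 : n = 0 := by omega
      subst hn0
      norm_num


section P
variable {ι : Type*} {Ω : Type*} [MeasurableSpace Ω] {P : MeasureTheory.Measure Ω}

lemma integrable_id_gaussianReal (v : NNReal) : Integrable id (gaussianReal 0 v) := by
  by_cases hv : v = 0
  · subst hv
    simp only [gaussianReal_zero_var]
    exact (integrable_const (0:ℝ)).congr (ae_eq_dirac id).symm
  · rw [gaussianReal_of_var_ne_zero _ hv, gaussianPDF_def]
    rw [integrable_withDensity_iff ((measurable_gaussianPDFReal 0 v).ennreal_ofReal) (by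
      filter_upwards with x using ENNReal.ofReal_lt_top)]
    have hvpos : (0:ℝ) < (v:ℝ) := by positivity
    have hb : (0:ℝ) < (2 * (v:ℝ))⁻¹ := by positivity
    have h1 : Integrable (fun x : ℝ => x ^ ((1:ℕ):ℝ) * rexp (-(2 * (v:ℝ))⁻¹ * x ^ 2)) volume :=
      integrable_rpow_mul_exp_neg_mul_sq hb (by norm_num)
    have h2 : Integrable (fun x : ℝ => x * rexp (-(2 * (v:ℝ))⁻¹ * x ^ 2)) volume := by
      refine h1.congr ?_
      filter_upwards with x
      norm_num
    have h3 := h2.const_mul ((Real.sqrt (2 * Real.pi * v))⁻¹)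
    refine h3.congr ?_
    filter_upwards with x
    rw [gaussianPDFReal, ENNReal.toReal_ofReal (by positivity)]
    rw [show -(x - 0) ^ 2 / (2 * (v:ℝ)) = -(2 * (v:ℝ))⁻¹ * x ^ 2 by field_simp; ring]
    simp only [id_eq, one_div]
    ring


lemma sup'_neg (s : Finset ι) (hs : s.Nonempty) (f : ι → ℝ) :
    s.sup' hs (fun i => -(f i)) = -(s.inf' hs f) := by
  induction hs using Finset.Nonempty.cons_induction with
  | singleton a => simp
  | cons a s h hs ih =>
    rw [Finset.sup'_cons hs, Finset.inf'_cons hs, ih]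
    rw [show min (f a) (s.inf' hs f) = -max (-(f a)) (-(s.inf' hs f)) by rw [← min_neg_neg]; simp]
    ring_nf

lemma sup'_add (s : Finset ι) (hs : s.Nonempty) (f : ι → ℝ) (c : ℝ) :
    s.sup' hs (fun i => f i + c) = s.sup' hs f + c := by
  induction hs using Finset.Nonempty.cons_induction with
  | singleton a => simp
  | cons a s h hs ih =>
    rw [Finset.sup'_cons hs, Finset.sup'_cons hs, ih, max_add_add_right]

lemma integrable_sup' (s : Finset ι) (hs : s.Nonempty) (f : ι → Ω → ℝ)
    (h : ∀ i ∈ s, Integrable (f i) P) :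
    Integrable (fun ω => s.sup' hs (fun i => f i ω)) P := by
  induction hs using Finset.Nonempty.cons_induction with
  | singleton a => simpa using h a (by simp)
  | cons a s hnotmem hs ih =>
    simp only [Finset.sup'_cons hs]
    exact Integrable.sup (h a (by simp)) (ih fun i hi => h i (by simp [hi]))

lemma integrable_inf' (s : Finset ι) (hs : s.Nonempty) (f : ι → Ω → ℝ)
    (h : ∀ i ∈ s, Integrable (f i) P) :
    Integrable (fun ω => s.inf' hs (fun i => f i ω)) P := by
  induction hs using Finset.Nonempty.cons_induction with
  | singleton a => simpa using h a (by simp)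
  | cons a s hnotmem hs ih =>
    simp only [Finset.inf'_cons hs]
    exact Integrable.inf (h a (by simp)) (ih fun i hi => h i (by simp [hi]))

lemma measurable_sup'' (s : Finset ι) (hs : s.Nonempty) {δ : Type*} [MeasurableSpace δ]
    (f : ι → δ → ℝ) (h : ∀ i ∈ s, Measurable (f i)) :
    Measurable (fun x => s.sup' hs (fun i => f i x)) := by
  have h1 := Finset.measurable_sup' hs h
  have : (fun x => s.sup' hs (fun i => f i x)) = s.sup' hs f := by
    funext x
    rw [Finset.sup'_apply]
  rw [this]; exact h1

lemma measurable_inf'' (s : Finset ι) (hs : s.Nonempty) {δ : Type*} [MeasurableSpace δ]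
    (f : ι → δ → ℝ) (h : ∀ i ∈ s, Measurable (f i)) :
    Measurable (fun x => s.inf' hs (fun i => f i x)) := by
  have h1 := (measurable_sup'' s hs (fun i x => -(f i x)) (fun i hi => (h i hi).neg)).neg
  have h2 : (fun x => s.inf' hs (fun i => f i x))
      = fun x => -(s.sup' hs (fun i => -(f i x))) := by
    funext x
    rw [sup'_neg, neg_neg]
  rw [h2]; exact h1


end P

lemma det (a : ℤ → ℝ) (ha0 : a 0 = 0) (N : ℕ) (hN : 1 ≤ N) :
    ∑ k ∈ Finset.Icc (1:ℤ) ((N:ℤ) - 1),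
      max (sInf ((fun n : ℤ => (a k - a (k - n)) / (n:ℝ)) '' Set.Icc 1 k)
           - sSup ((fun n : ℤ => (a (k + n) - a k) / (n:ℝ)) '' Set.Icc 1 ((N:ℤ) - k))) 0
    = sSup ((fun n : ℤ => a n / (n:ℝ)) '' Set.Icc 1 (N:ℤ))
      - sInf ((fun n : ℤ => (a (N:ℤ) - a ((N:ℤ) - n)) / (n:ℝ)) '' Set.Icc 1 (N:ℤ)) := by
  rw [← dd_one a ha0 (N:ℤ), ← dd_top a (N:ℤ), ← sum_tele (dd a (N:ℤ)) N hN]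
  apply Finset.sum_congr rfl
  intro k hk
  rw [Finset.mem_Icc] at hk
  rw [img_gm, img_gp]
  exact step hk.1 (by omega)

end Stmt9

/-- under the symmetry and shift properties of `(I_n)`,
`E[-min_{1≤n≤N}(I_N - I_{N-n})/n] = E[max_{1≤n≤N} I_n/n]` and `E[F_N] = 2E[max_{1≤n≤N} I_n/n]`. -/
theorem stmt_9 {Ω : Type*} [MeasurableSpace Ω] (P : Measure Ω) [IsProbabilityMeasure P]
    (I : ℤ → Ω → ℝ) (hMeas : ∀ n, Measurable (I n))
    (hGauss : IsCenteredGaussianFamily P I)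
    (hI0 : ∀ ω, I 0 ω = 0)
    (hsymm : Measure.map (fun ω => fun n : ℤ => I (-n) ω) P
      = Measure.map (fun ω => fun n : ℤ => I n ω) P)
    (T : ℤ → Ω → ℝ)
    (hTcentered : ∀ n₀ : ℤ, ∫ ω, T n₀ ω ∂P = 0)
    (hshift : ∀ n₀ : ℤ,
      Measure.map (fun ω => fun n : ℤ => I (n₀ + n) ω - I n₀ ω - (n : ℝ) * T n₀ ω) P
        = Measure.map (fun ω => fun n : ℤ => I n ω) P)
    (N : ℕ) (hN : 1 ≤ N) :
    (∫ ω, -sInf ((fun n : ℤ => (I N ω - I ((N : ℤ) - n) ω) / (n : ℝ)) '' Set.Icc 1 (N : ℤ)) ∂P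
        = ∫ ω, sSup ((fun n : ℤ => I n ω / (n : ℝ)) '' Set.Icc 1 (N : ℤ)) ∂P) ∧
    (∫ ω, (∑ k ∈ Finset.Icc (1 : ℤ) ((N : ℤ) - 1),
        max ((sInf ((fun n : ℤ => (I k ω - I (k - n) ω) / (n : ℝ)) '' Set.Icc 1 k))
             - (sSup ((fun n : ℤ => (I (k + n) ω - I k ω) / (n : ℝ)) '' Set.Icc 1 ((N : ℤ) - k))))
          0) ∂P
      = 2 * ∫ ω, sSup ((fun n : ℤ => I n ω / (n : ℝ)) '' Set.Icc 1 (N : ℤ)) ∂P) := by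
  classical
  have hNz1 : (1:ℤ) ≤ (N:ℤ) := by exact_mod_cast hN
  have hne : (Finset.Icc (1:ℤ) (N:ℤ)).Nonempty := Finset.nonempty_Icc.mpr hNz1
  have hg : Measurable (fun ω => fun n : ℤ => I n ω) :=
    measurable_pi_lambda _ (fun n => hMeas n)
  -- law of each coordinate is Gaussian
  have hIgauss : ∀ m : ℤ, ∃ v : NNReal, Measure.map (I m) P = gaussianReal 0 v := by
    intro m
    obtain ⟨v, hv⟩ := hGauss 1 (fun _ => m) (fun _ => 1)
    refine ⟨v, ?_⟩
    have heq : (fun ω => ∑ i : Fin 1, (fun _ : Fin 1 => (1:ℝ)) i * I ((fun _ : Fin 1 => m) i) ω)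
        = I m := by funext ω; simp
    rwa [heq] at hv
  have hI_int : ∀ m : ℤ, Integrable (I m) P := by
    intro m
    obtain ⟨v, hv⟩ := hIgauss m
    have h1 : Integrable id (Measure.map (I m) P) := by
      rw [hv]; exact Stmt9.integrable_id_gaussianReal v
    exact (integrable_map_measure measurable_id.aestronglyMeasurable
      (hMeas m).aemeasurable).mp h1
  -- the shifted process is a.e.-measurable
  have hgsae : AEMeasurable
      (fun ω => fun n : ℤ => I ((N:ℤ) + n) ω - I (N:ℤ) ω - (n:ℝ) * T (N:ℤ) ω) P := by
    by_contra h
    have h0 := hshift (N:ℤ)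
    rw [Measure.map_of_not_aemeasurable h] at h0
    have hP : IsProbabilityMeasure (Measure.map (fun ω => fun n : ℤ => I n ω) P) :=
      Measure.isProbabilityMeasure_map hg.aemeasurable
    exact (IsProbabilityMeasure.ne_zero _) h0.symm
  -- reflected-and-shifted process has the law of I
  have hphim : Measurable (fun x : ℤ → ℝ => fun n : ℤ => x (-n)) :=
    measurable_pi_lambda _ (fun n => measurable_pi_apply (-n))
  have hVc : (fun ω => fun n : ℤ => I ((N:ℤ) - n) ω - I (N:ℤ) ω + (n:ℝ) * T (N:ℤ) ω)
      = (fun x : ℤ → ℝ => fun n : ℤ => x (-n)) ∘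
        (fun ω => fun n : ℤ => I ((N:ℤ) + n) ω - I (N:ℤ) ω - (n:ℝ) * T (N:ℤ) ω) := by
    funext ω
    funext n
    simp only [Function.comp_apply]
    rw [show (N:ℤ) + -n = (N:ℤ) - n by ring]
    push_cast
    ring
  have hVae : AEMeasurable
      (fun ω => fun n : ℤ => I ((N:ℤ) - n) ω - I (N:ℤ) ω + (n:ℝ) * T (N:ℤ) ω) P := by
    rw [hVc]; exact hphim.comp_aemeasurable hgsae
  have hlaw : Measure.map
        (fun ω => fun n : ℤ => I ((N:ℤ) - n) ω - I (N:ℤ) ω + (n:ℝ) * T (N:ℤ) ω) P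
      = Measure.map (fun ω => fun n : ℤ => I n ω) P := by
    rw [hVc, ← AEMeasurable.map_map_of_aemeasurable hphim.aemeasurable hgsae, hshift (N:ℤ),
      Measure.map_map hphim hg]
    exact hsymm
  -- the sup functional
  have hPsim : Measurable (fun x : ℤ → ℝ =>
      (Finset.Icc (1:ℤ) (N:ℤ)).sup' hne (fun n => x n / (n:ℝ))) :=
    Stmt9.measurable_sup'' _ hne _ (fun n _ => (measurable_pi_apply n).div_const _)
  have hkey : ∫ ω, (Finset.Icc (1:ℤ) (N:ℤ)).sup' hne
        (fun n => (I ((N:ℤ) - n) ω - I (N:ℤ) ω + (n:ℝ) * T (N:ℤ) ω) / (n:ℝ)) ∂P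
      = ∫ ω, (Finset.Icc (1:ℤ) (N:ℤ)).sup' hne (fun n => I n ω / (n:ℝ)) ∂P := by
    have h1 := integral_map (μ := P) hVae hPsim.aestronglyMeasurable
    have h2 := integral_map (μ := P) hg.aemeasurable hPsim.aestronglyMeasurable
    rw [hlaw] at h1
    rw [h2] at h1
    exact h1.symm
  -- pointwise simplification of the left integrand
  have hPsiV : ∀ ω, (Finset.Icc (1:ℤ) (N:ℤ)).sup' hne
        (fun n => (I ((N:ℤ) - n) ω - I (N:ℤ) ω + (n:ℝ) * T (N:ℤ) ω) / (n:ℝ))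
      = -((Finset.Icc (1:ℤ) (N:ℤ)).inf' hne
          (fun n => (I (N:ℤ) ω - I ((N:ℤ) - n) ω) / (n:ℝ))) + T (N:ℤ) ω := by
    intro ω
    have h1 : ∀ n ∈ Finset.Icc (1:ℤ) (N:ℤ),
        (I ((N:ℤ) - n) ω - I (N:ℤ) ω + (n:ℝ) * T (N:ℤ) ω) / (n:ℝ)
          = -((I (N:ℤ) ω - I ((N:ℤ) - n) ω) / (n:ℝ)) + T (N:ℤ) ω := by
      intro n hn
      rw [Finset.mem_Icc] at hn
      have hn0 : (n:ℝ) ≠ 0 := Int.cast_ne_zero.mpr (by omega)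
      field_simp
      ring
    rw [Finset.sup'_congr hne rfl h1, Stmt9.sup'_add, Stmt9.sup'_neg]
  -- integrability
  have hγN_int : Integrable (fun ω => (Finset.Icc (1:ℤ) (N:ℤ)).inf' hne
      (fun n => (I (N:ℤ) ω - I ((N:ℤ) - n) ω) / (n:ℝ))) P :=
    Stmt9.integrable_inf' _ hne _ (fun n _ => ((hI_int _).sub (hI_int _)).div_const _)
  have hγ0_int : Integrable (fun ω => (Finset.Icc (1:ℤ) (N:ℤ)).sup' hne
      (fun n => I n ω / (n:ℝ))) P :=
    Stmt9.integrable_sup' _ hne _ (fun n _ => (hI_int n).div_const _)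
  have hT_int : Integrable (T (N:ℤ)) P := by
    have hev : Measurable (fun x : ℤ → ℝ => x 1) := measurable_pi_apply 1
    have hWae : AEMeasurable
        (fun ω => I ((N:ℤ) + 1) ω - I (N:ℤ) ω - ((1:ℤ):ℝ) * T (N:ℤ) ω) P :=
      hev.comp_aemeasurable hgsae
    have hWmap : Measure.map
          (fun ω => I ((N:ℤ) + 1) ω - I (N:ℤ) ω - ((1:ℤ):ℝ) * T (N:ℤ) ω) P
        = Measure.map (I 1) P := by
      have h1 := (AEMeasurable.map_map_of_aemeasurable hev.aemeasurable hgsae).symm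
      rw [hshift (N:ℤ), Measure.map_map hev hg] at h1
      exact h1
    obtain ⟨v, hv⟩ := hIgauss 1
    have hW_int : Integrable
        (fun ω => I ((N:ℤ) + 1) ω - I (N:ℤ) ω - ((1:ℤ):ℝ) * T (N:ℤ) ω) P := by
      have h1 : Integrable id (Measure.map
          (fun ω => I ((N:ℤ) + 1) ω - I (N:ℤ) ω - ((1:ℤ):ℝ) * T (N:ℤ) ω) P) := by
        rw [hWmap, hv]; exact Stmt9.integrable_id_gaussianReal v
      exact (integrable_map_measure measurable_id.aestronglyMeasurable hWae).mp h1
    have h2 : (fun ω => (I ((N:ℤ) + 1) ω - I (N:ℤ) ω)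
        - (I ((N:ℤ) + 1) ω - I (N:ℤ) ω - ((1:ℤ):ℝ) * T (N:ℤ) ω)) = T (N:ℤ) := by
      funext ω
      simp only [Int.cast_one, one_mul]
      ring
    rw [← h2]
    exact ((hI_int _).sub (hI_int _)).sub hW_int
  -- part 1 in finset form
  have part1' : ∫ ω, -((Finset.Icc (1:ℤ) (N:ℤ)).inf' hne
        (fun n => (I (N:ℤ) ω - I ((N:ℤ) - n) ω) / (n:ℝ))) ∂P
      = ∫ ω, (Finset.Icc (1:ℤ) (N:ℤ)).sup' hne (fun n => I n ω / (n:ℝ)) ∂P := by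
    rw [← hkey]
    rw [show (fun ω => (Finset.Icc (1:ℤ) (N:ℤ)).sup' hne
        (fun n => (I ((N:ℤ) - n) ω - I (N:ℤ) ω + (n:ℝ) * T (N:ℤ) ω) / (n:ℝ)))
      = fun ω => -((Finset.Icc (1:ℤ) (N:ℤ)).inf' hne
          (fun n => (I (N:ℤ) ω - I ((N:ℤ) - n) ω) / (n:ℝ))) + T (N:ℤ) ω from funext hPsiV]
    have hneg : Integrable (fun ω => -((Finset.Icc (1:ℤ) (N:ℤ)).inf' hne
        (fun n => (I (N:ℤ) ω - I ((N:ℤ) - n) ω) / (n:ℝ)))) P := hγN_int.neg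
    rw [integral_add hneg hT_int, hTcentered (N:ℤ), add_zero]
  -- bridging sSup/sInf over Set.Icc with Finset.sup'/inf'
  have hbS : ∀ f : ℤ → ℝ, sSup (f '' Set.Icc 1 (N:ℤ)) = (Finset.Icc (1:ℤ) (N:ℤ)).sup' hne f := by
    intro f; rw [Finset.sup'_eq_csSup_image, Finset.coe_Icc]
  have hbI : ∀ f : ℤ → ℝ, sInf (f '' Set.Icc 1 (N:ℤ)) = (Finset.Icc (1:ℤ) (N:ℤ)).inf' hne f := by
    intro f; rw [Finset.inf'_eq_csInf_image, Finset.coe_Icc]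
  have part1 : ∫ ω, -sInf ((fun n : ℤ => (I N ω - I ((N : ℤ) - n) ω) / (n : ℝ))
        '' Set.Icc 1 (N : ℤ)) ∂P
      = ∫ ω, sSup ((fun n : ℤ => I n ω / (n : ℝ)) '' Set.Icc 1 (N : ℤ)) ∂P := by
    refine (integral_congr_ae (Filter.Eventually.of_forall fun ω => ?_)).trans
      (part1'.trans (integral_congr_ae (Filter.Eventually.of_forall fun ω => ?_)))
    · exact congrArg Neg.neg (hbI _)
    · exact (hbS _).symm
  refine ⟨part1, ?_⟩
  -- part 2
  have hdet : ∀ ω, (∑ k ∈ Finset.Icc (1 : ℤ) ((N : ℤ) - 1),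
      max ((sInf ((fun n : ℤ => (I k ω - I (k - n) ω) / (n : ℝ)) '' Set.Icc 1 k))
           - (sSup ((fun n : ℤ => (I (k + n) ω - I k ω) / (n : ℝ)) '' Set.Icc 1 ((N : ℤ) - k))))
        0)
      = (Finset.Icc (1:ℤ) (N:ℤ)).sup' hne (fun n => I n ω / (n:ℝ))
        - (Finset.Icc (1:ℤ) (N:ℤ)).inf' hne
            (fun n => (I (N:ℤ) ω - I ((N:ℤ) - n) ω) / (n:ℝ)) := by
    intro ω
    rw [Stmt9.det (fun n => I n ω) (hI0 ω) N hN, hbS, hbI]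
  rw [integral_congr_ae (Filter.Eventually.of_forall hdet),
    integral_sub hγ0_int hγN_int]
  have h3 : ∫ ω, (Finset.Icc (1:ℤ) (N:ℤ)).inf' hne
        (fun n => (I (N:ℤ) ω - I ((N:ℤ) - n) ω) / (n:ℝ)) ∂P
      = -∫ ω, (Finset.Icc (1:ℤ) (N:ℤ)).sup' hne (fun n => I n ω / (n:ℝ)) ∂P := by
    rw [← part1', integral_neg, neg_neg]
  rw [h3]
  rw [show ∫ ω, sSup ((fun n : ℤ => I n ω / (n : ℝ)) '' Set.Icc 1 (N : ℤ)) ∂P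
      = ∫ ω, (Finset.Icc (1:ℤ) (N:ℤ)).sup' hne (fun n => I n ω / (n:ℝ)) ∂P from
    integral_congr_ae (Filter.Eventually.of_forall fun ω => hbS _)]
  ring
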